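/- Let p be a prime and let m ≥ 2 be a natural number dividing p − 1. Let c, e, j ∈ ZMod p satisfy c ∉ {0, 1}, j ∉ {0, 1}, and e ∉ {0, j, c, c + j − 1, j·c}. Suppose there exists x ∈ ZMod p such that: x is a nonzero m-th power; (1 − j·x)/(1 − j) is a nonzero m-th power; (e − x·j·c)/(e − j·c) is not a nonzero m-th power; and (x·j·(1 − c) + e − j)/(e − j·c) is not a nonzero m-th power. Then there exists a diagonally cyclic latin square L : ZMod p → ZMod p → ZMod p with L 0 0 = 0, L 0 1 = j, and L 0 c = e. -/

import Mathlib

/-- `L` is a latin square of order `n`: every row and every column is a bijection. -/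
def IsLatinSquare {n : ℕ} (L : ZMod n → ZMod n → ZMod n) : Prop :=
  (∀ i, Function.Bijective (fun j => L i j)) ∧
  (∀ j, Function.Bijective (fun i => L i j))

/-- `L` is diagonally cyclic. -/
def IsDiagonallyCyclic {n : ℕ} (L : ZMod n → ZMod n → ZMod n) : Prop :=
  ∀ i j, L (i + 1) (j + 1) = L i j + 1

/-- `x` is a nonzero `m`-th power in `ZMod p`. -/
def IsNonzeroMthPower {p : ℕ} (m : ℕ) (x : ZMod p) : Prop :=
  x ≠ 0 ∧ ∃ y : ZMod p, x = y ^ m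

lemma aux_mul {p m : ℕ} [Fact p.Prime] (hm : m ≠ 0) {a : ZMod p}
    (ha : IsNonzeroMthPower m a) (b : ZMod p) :
    IsNonzeroMthPower m (a * b) ↔ IsNonzeroMthPower m b := by
  obtain ⟨ha0, y, hy⟩ := ha
  have hy0 : y ≠ 0 := by rintro rfl; exact ha0 (by simp [hy, zero_pow hm])
  constructor
  · rintro ⟨hab0, z, hz⟩
    refine ⟨right_ne_zero_of_mul hab0, y⁻¹ * z, ?_⟩
    rw [mul_pow, inv_pow, ← hy, ← hz, inv_mul_cancel_left₀ ha0]
  · rintro ⟨hb0, z, hz⟩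
    exact ⟨mul_ne_zero ha0 hb0, y * z, by rw [mul_pow, ← hy, ← hz]⟩

lemma affine_bij {F : Type*} [Field F] {a : F} (ha : a ≠ 0) (b : F) :
    Function.Bijective (fun t : F => a * t + b) := by
  rw [Function.bijective_iff_has_inverse]
  refine ⟨fun y => (y - b) / a, fun t => by field_simp; ring, fun y => by field_simp; ring⟩

theorem stmt3 (p : ℕ) [hp : Fact p.Prime] (m : ℕ) (hm2 : 2 ≤ m) (hmd : m ∣ p - 1)
    (c e j : ZMod p) (hc0 : c ≠ 0) (hc1 : c ≠ 1) (hj0 : j ≠ 0) (hj1 : j ≠ 1)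
    (he0 : e ≠ 0) (hej : e ≠ j) (hec : e ≠ c) (hecj : e ≠ c + j - 1)
    (hejc : e ≠ j * c)
    (hx : ∃ x : ZMod p, IsNonzeroMthPower m x ∧
      IsNonzeroMthPower m ((1 - j * x) / (1 - j)) ∧
      ¬ IsNonzeroMthPower m ((e - x * j * c) / (e - j * c)) ∧
      ¬ IsNonzeroMthPower m ((x * j * (1 - c) + e - j) / (e - j * c))) :
    ∃ L : ZMod p → ZMod p → ZMod p, IsLatinSquare L ∧ IsDiagonallyCyclic L ∧
      L 0 0 = 0 ∧ L 0 1 = j ∧ L 0 c = e := by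
  classical
  obtain ⟨x, hx1, hx2, hx3, hx4⟩ := hx
  have hm0 : m ≠ 0 := by omega
  have hone : IsNonzeroMthPower m (1 : ZMod p) := ⟨one_ne_zero, 1, (one_pow m).symm⟩
  have hejc' : e - j * c ≠ 0 := sub_ne_zero.mpr hejc
  have hx0 : x ≠ 0 := hx1.1
  have hxne1 : x ≠ 1 := by
    rintro rfl
    exact hx3 (by rw [one_mul, div_self hejc']; exact hone)
  have h1j : (1 : ZMod p) - j ≠ 0 := sub_ne_zero.mpr (Ne.symm hj1)
  have h1jx : (1 : ZMod p) - j * x ≠ 0 := by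
    intro h
    exact hx2.1 (by rw [h, zero_div])
  have hj1' : j - 1 ≠ 0 := sub_ne_zero.mpr hj1
  have hjx1 : j * x - 1 ≠ 0 := by
    intro h; apply h1jx; linear_combination -h
  -- the base cyclotomic orthomorphism
  set θ : ZMod p → ZMod p :=
    fun t => if IsNonzeroMthPower m t then j * x * t else j * t with hθ
  have hθP : ∀ t, IsNonzeroMthPower m t → θ t = j * x * t := fun t h => if_pos h
  have hθN : ∀ t, ¬ IsNonzeroMthPower m t → θ t = j * t := fun t h => if_neg h
  have hθbij : Function.Bijective θ := by
    rw [← Finite.injective_iff_bijective]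
    intro s t hst
    by_cases hs : IsNonzeroMthPower m s <;> by_cases ht : IsNonzeroMthPower m t
    · rw [hθP s hs, hθP t ht] at hst
      exact mul_left_cancel₀ (mul_ne_zero hj0 hx0) hst
    · rw [hθP s hs, hθN t ht] at hst
      exfalso; apply ht
      have : t = x * s := mul_left_cancel₀ hj0 (by linear_combination -hst)
      rw [this]; exact (aux_mul hm0 hx1 s).mpr hs
    · rw [hθN s hs, hθP t ht] at hst
      exfalso; apply hs
      have : s = x * t := mul_left_cancel₀ hj0 (by linear_combination hst)
      rw [this]; exact (aux_mul hm0 hx1 t).mpr ht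
    · rw [hθN s hs, hθN t ht] at hst
      exact mul_left_cancel₀ hj0 hst
  have hρθ : ∀ t, θ t - t = if IsNonzeroMthPower m t then (j * x - 1) * t else (j - 1) * t := by
    intro t
    by_cases h : IsNonzeroMthPower m t <;> simp only [hθ, h, if_true, if_false] <;> ring
  have hr : IsNonzeroMthPower m ((j * x - 1) / (j - 1)) := by
    have : (j * x - 1) / (j - 1) = (1 - j * x) / (1 - j) := by
      rw [div_eq_div_iff hj1' h1j]; ring
    rw [this]; exact hx2
  have hθ'bij : Function.Bijective (fun t => θ t - t) := by
    rw [← Finite.injective_iff_bijective]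
    intro s t hst
    simp only [hρθ] at hst
    by_cases hs : IsNonzeroMthPower m s <;> by_cases ht : IsNonzeroMthPower m t <;>
      simp only [hs, ht, if_true, if_false] at hst
    · exact mul_left_cancel₀ hjx1 hst
    · exfalso; apply ht
      have : t = (j * x - 1) / (j - 1) * s := by
        rw [div_mul_eq_mul_div, eq_div_iff hj1']
        linear_combination -hst
      rw [this]; exact (aux_mul hm0 hr s).mpr hs
    · exfalso; apply hs
      have : s = (j * x - 1) / (j - 1) * t := by
        rw [div_mul_eq_mul_div, eq_div_iff hj1']
        linear_combination hst
      rw [this]; exact (aux_mul hm0 hr t).mpr ht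
    · exact mul_left_cancel₀ hj1' hst
  -- affine conjugation parameters
  set k : ZMod p := j * (x - 1) / (e - j * c) with hk
  set g : ZMod p := (e - j * x * c) / (e - j * c) with hg
  have hk0 : k ≠ 0 :=
    div_ne_zero (mul_ne_zero hj0 (sub_ne_zero.mpr hxne1)) hejc'
  have hgP : ¬ IsNonzeroMthPower m g := by
    have : g = (e - x * j * c) / (e - j * c) := by rw [hg]; ring_nf
    rw [this]; exact hx3
  have hkgP : ¬ IsNonzeroMthPower m (k + g) := by
    have : k + g = (x * j * (1 - c) + e - j) / (e - j * c) := by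
      rw [hk, hg, ← add_div, div_eq_div_iff hejc' hejc']; ring
    rw [this]; exact hx4
  have hkcg : k * c + g = 1 := by
    rw [hk, hg, div_mul_eq_mul_div, ← add_div, div_eq_one_iff_eq hejc']; ring
  set σ : ZMod p → ZMod p := fun t => (θ (k * t + g) - θ g) * k⁻¹ with hσ
  have hσbij : Function.Bijective σ := by
    have : σ = (fun y => k⁻¹ * y + (-(θ g) * k⁻¹)) ∘ θ ∘ (fun t => k * t + g) := by
      funext t; simp only [hσ, Function.comp_apply]; ring
    rw [this]
    exact ((affine_bij (inv_ne_zero hk0) _).comp hθbij).comp (affine_bij hk0 g)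
  have hρbij : Function.Bijective (fun t => σ t - t) := by
    have : (fun t => σ t - t) =
        (fun y => k⁻¹ * y + (-(θ g - g) * k⁻¹)) ∘ (fun t => θ t - t) ∘ (fun t => k * t + g) := by
      funext t; simp only [hσ, Function.comp_apply]; field_simp; ring
    rw [this]
    exact ((affine_bij (inv_ne_zero hk0) _).comp hθ'bij).comp (affine_bij hk0 g)
  refine ⟨fun i t => σ (t - i) + i, ⟨?_, ?_⟩, ?_, ?_, ?_, ?_⟩
  · intro i
    have : (fun t => σ (t - i) + i) =
        (fun y => (1:ZMod p) * y + i) ∘ σ ∘ (fun t => (1:ZMod p) * t + (-i)) := by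
      funext t; simp only [Function.comp_apply]; ring_nf
    rw [this]
    exact ((affine_bij one_ne_zero i).comp hσbij).comp (affine_bij one_ne_zero (-i))
  · intro t
    have : (fun i => σ (t - i) + i) =
        (fun y => (1:ZMod p) * y + t) ∘ (fun u => σ u - u) ∘ (fun i => (-1:ZMod p) * i + t) := by
      funext i; simp only [Function.comp_apply]; ring_nf
    rw [this]
    exact ((affine_bij one_ne_zero t).comp hρbij).comp (affine_bij (neg_ne_zero.mpr one_ne_zero) t)
  · intro i t
    show σ (t + 1 - (i + 1)) + (i + 1) = σ (t - i) + i + 1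
    have : t + 1 - (i + 1) = t - i := by ring
    rw [this]; ring
  · -- L 0 0 = 0
    show (θ (k * (0 - 0) + g) - θ g) * k⁻¹ + 0 = 0
    rw [sub_zero, mul_zero, zero_add, sub_self, zero_mul, add_zero]
  · -- L 0 1 = j
    show (θ (k * (1 - 0) + g) - θ g) * k⁻¹ + 0 = j
    rw [sub_zero, mul_one, add_zero, hθN _ hkgP, hθN _ hgP]
    field_simp; ring
  · -- L 0 c = e
    show (θ (k * (c - 0) + g) - θ g) * k⁻¹ + 0 = e
    rw [sub_zero, add_zero, hkcg, hθP 1 hone, hθN _ hgP]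
    rw [hg, hk]
    have hx10 : x - 1 ≠ 0 := sub_ne_zero.mpr hxne1
    field_simp
    ring
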